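/- arXiv:1909.03407 — 6 statements merged into one kernel-verified Lean document; each statement's English description precedes it below -/
import Mathlib

section
/- Let F/k be a Galois extension of number fields of degree 2, with nontrivial automorphism τ ∈ Gal(F/k), and let p be a prime number that does not divide the class number h(k) = |Cl(k)| of k. Then τ acts as inversion on the ideal classes of F of p-power order: for every nonzero ideal I of 𝓞_F whose ideal class [I] ∈ Cl(F) has order a power of p, one has [I]·[τ(I)] = 1 in Cl(F). -/
open NumberField
open scoped nonZeroDivisors

section Aux

variable {S : Type*} [CommRing S]

/-- If `A ≤ B` after localizing at (the image of) every maximal ideal of `ℤ`, then `A ≤ B`. -/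
theorem aux_le_of_loc {A B : Ideal S}
    (h : ∀ (P : Ideal ℤ) [P.IsMaximal],
      A.map (algebraMap S (Localization (Algebra.algebraMapSubmonoid S P.primeCompl))) ≤
      B.map (algebraMap S (Localization (Algebra.algebraMapSubmonoid S P.primeCompl)))) :
    A ≤ B := by
  intro a ha
  set J : Ideal ℤ := (B.restrictScalars ℤ).comap (LinearMap.toSpanSingleton ℤ S a) with hJdef
  have hmemJ : ∀ r : ℤ, r ∈ J ↔ algebraMap ℤ S r * a ∈ B := by
    intro r
    rw [hJdef, Submodule.mem_comap, LinearMap.toSpanSingleton_apply,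
      Submodule.restrictScalars_mem, ← algebraMap_smul S r a, smul_eq_mul]
  by_cases hJtop : J = ⊤
  · have h1 : (1 : ℤ) ∈ J := hJtop ▸ Submodule.mem_top
    rw [hmemJ] at h1
    simpa using h1
  obtain ⟨P, hPmax, hJP⟩ := J.exists_le_maximal hJtop
  exfalso
  have hmem := h P (Ideal.mem_map_of_mem
    (algebraMap S (Localization (Algebra.algebraMapSubmonoid S P.primeCompl))) ha)
  rw [IsLocalization.mem_map_algebraMap_iff (Algebra.algebraMapSubmonoid S P.primeCompl)] at hmem
  obtain ⟨⟨⟨b, hb⟩, ⟨s, hs⟩⟩, heq⟩ := hmem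
  simp only at heq
  rw [← map_mul] at heq
  obtain ⟨c, hc⟩ :=
    (IsLocalization.eq_iff_exists (Algebra.algebraMapSubmonoid S P.primeCompl)
      (Localization (Algebra.algebraMapSubmonoid S P.primeCompl))).mp heq
  -- hc : c * (a * s) = c * b
  have hcs : (c : S) * s ∈ Algebra.algebraMapSubmonoid S P.primeCompl := mul_mem c.2 hs
  obtain ⟨r, hrP, hr⟩ := hcs
  have hrJ : r ∈ J := by
    rw [hmemJ]
    have : algebraMap ℤ S r * a = (c : S) * b := by rw [hr]; linear_combination hc
    rw [this]
    exact B.mul_mem_left _ hb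
  exact hrP (hJP hrJ)

/-- The key identity: for a ring automorphism `σ` of a Dedekind domain `S` (finite free
over `ℤ`), and any ideal `I`, the ideal generated by the elements `x * σ x`, `x ∈ I`,
is `I * σ(I)`. -/
theorem aux_key [IsDomain S] [IsDedekindDomain S] [Module.Free ℤ S] [Module.Finite ℤ S]
    (σ : S ≃+* S) (I : Ideal S) :
    Ideal.span ((fun x => x * σ x) '' (I : Set S)) = I * Ideal.map (σ : S →+* S) I := by
  have H : ∀ (P : Ideal ℤ) [P.IsMaximal],
      (Ideal.span ((fun x => x * σ x) '' (I : Set S))).map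
        (algebraMap S (Localization (Algebra.algebraMapSubmonoid S P.primeCompl))) =
      (I * Ideal.map (σ : S →+* S) I).map
        (algebraMap S (Localization (Algebra.algebraMapSubmonoid S P.primeCompl))) := by
    intro P hPmax
    have hP0 : P ≠ ⊥ := by
      intro h0
      have h2top : Ideal.span ({2} : Set ℤ) ≠ ⊤ := by
        rw [Ne, Ideal.span_singleton_eq_top]
        rintro h2
        rcases Int.isUnit_iff.mp h2 with h | h <;> omega
      have := hPmax.eq_of_le h2top (h0 ▸ bot_le)
      have h2 : (2 : ℤ) ∈ P := this ▸ Ideal.subset_span rfl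
      rw [h0] at h2
      simpa using h2
    set P' := Algebra.algebraMapSubmonoid S P.primeCompl with hP'def
    set Sₚ := Localization P' with hSₚdef
    have hP'le : P' ≤ S⁰ :=
      map_le_nonZeroDivisors_of_injective _ (FaithfulSMul.algebraMap_injective ℤ S)
        P.primeCompl_le_nonZeroDivisors
    haveI : IsDomain Sₚ := IsLocalization.isDomain_localization hP'le
    haveI : IsDedekindDomain Sₚ := IsLocalization.isDedekindDomain S hP'le _
    haveI : IsPrincipalIdealRing Sₚ :=
      IsDedekindDomain.isPrincipalIdealRing_localization_over_prime S P hP0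
    set g := algebraMap S Sₚ with hgdef
    -- σ preserves P'
    have hσP' : P'.map σ.toMonoidHom = P' := by
      have hcomm : ∀ n : ℤ, σ (algebraMap ℤ S n) = algebraMap ℤ S n := by
        intro n
        rw [algebraMap_int_eq]
        exact map_intCast σ.toRingHom n
      ext x
      constructor
      · rintro ⟨y, ⟨r, hrP, rfl⟩, rfl⟩
        exact ⟨r, hrP, (hcomm r).symm⟩
      · rintro ⟨r, hrP, rfl⟩
        exact ⟨algebraMap ℤ S r, ⟨r, hrP, rfl⟩, hcomm r⟩
    set τₚ : Sₚ ≃+* Sₚ := IsLocalization.ringEquivOfRingEquiv Sₚ Sₚ σ hσP' with hτₚdef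
    have hcomm : ∀ x : S, τₚ (g x) = g (σ x) := fun x =>
      IsLocalization.ringEquivOfRingEquiv_eq hσP' x
    -- the localized ideal of I is principal
    obtain ⟨y, hy⟩ := (IsPrincipalIdealRing.principal (I.map g)).principal
    rw [Ideal.submodule_span_eq] at hy
    -- RHS localizes to span {y * τₚ y}
    have hRHS : (I * Ideal.map (σ : S →+* S) I).map g = Ideal.span {y * τₚ y} := by
      rw [Ideal.map_mul]
      have h1 : (Ideal.map (σ : S →+* S) I).map g = Ideal.map (τₚ : Sₚ →+* Sₚ) (I.map g) := by
        rw [Ideal.map_map, Ideal.map_map]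
        congr 1
        ext x
        simp [hcomm x]
      rw [h1, hy, Ideal.map_span, Set.image_singleton,
        Ideal.span_singleton_mul_span_singleton]
      rfl
    -- LHS localizes to span {y * τₚ y} as well
    have hLHS : (Ideal.span ((fun x => x * σ x) '' (I : Set S))).map g =
        Ideal.span {y * τₚ y} := by
      rw [Ideal.map_span]
      apply le_antisymm
      · rw [Ideal.span_le]
        rintro _ ⟨_, ⟨x, hx, rfl⟩, rfl⟩
        have hgx : g x ∈ Ideal.span {y} := by
          rw [← hy]; exact Ideal.mem_map_of_mem g hx
        obtain ⟨c, hc⟩ := Ideal.mem_span_singleton'.mp hgx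
        refine SetLike.mem_coe.mpr (Ideal.mem_span_singleton.mpr ⟨c * τₚ c, ?_⟩)
        show g (x * σ x) = y * τₚ y * (c * τₚ c)
        rw [map_mul, ← hcomm x, ← hc, map_mul]
        ring
      · rw [Ideal.span_le, Set.singleton_subset_iff]
        have hyI : y ∈ I.map g := by rw [hy]; exact Ideal.mem_span_singleton_self y
        rw [IsLocalization.mem_map_algebraMap_iff P' Sₚ] at hyI
        obtain ⟨⟨⟨x, hx⟩, ⟨s, hs⟩⟩, heq⟩ := hyI
        simp only at heq
        -- heq : y * g s = g x
        have hsu : IsUnit (g s) := IsLocalization.map_units Sₚ ⟨s, hs⟩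
        have hσs : σ s ∈ P' := by
          rw [← hσP']; exact ⟨s, hs, rfl⟩
        have hσsu : IsUnit (g (σ s)) := IsLocalization.map_units Sₚ ⟨σ s, hσs⟩
        obtain ⟨u, hu⟩ := (hsu.mul hσsu)
        have h2 : (y * τₚ y) * (u : Sₚ) = g x * τₚ (g x) := by
          have heq2 : τₚ y * τₚ (g s) = τₚ (g x) := by rw [← map_mul, heq]
          rw [hu]
          calc y * τₚ y * (g s * g (σ s))
              = (y * g s) * (τₚ y * g (σ s)) := by ring
            _ = g x * (τₚ y * τₚ (g s)) := by rw [heq, ← hcomm s]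
            _ = g x * τₚ (g x) := by rw [heq2]
        have h3 : y * τₚ y = (g x * τₚ (g x)) * (↑u⁻¹ : Sₚ) := by
          rw [← h2]
          rw [mul_assoc, Units.mul_inv, mul_one]
        rw [h3]
        exact Ideal.mul_mem_right _ _
          (Ideal.subset_span ⟨x * σ x, ⟨x, hx, rfl⟩, by rw [map_mul, hcomm x]⟩)
    rw [hRHS, hLHS]
  exact le_antisymm (aux_le_of_loc fun P _ => (H P).le) (aux_le_of_loc fun P _ => (H P).ge)

end Aux

set_option maxHeartbeats 1000000 in
set_option synthInstance.maxHeartbeats 100000 in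
/-- For a quadratic Galois extension `F/k` of number fields with
nontrivial automorphism `τ`, and a prime `p` not dividing the class number of `k`,
`τ` inverts the ideal classes of `F` of `p`-power order: `[I]·[τ(I)] = 1`. -/
theorem stmt_4 (k F : Type*) [Field k] [Field F] [NumberField k] [NumberField F]
    [Algebra k F] [IsGalois k F] (hdeg : Module.finrank k F = 2)
    (τ : F ≃ₐ[k] F) (hτ : τ ≠ 1)
    (p : ℕ) (hp : p.Prime) (hpcl : ¬ p ∣ NumberField.classNumber k)
    (I : (Ideal (𝓞 F))⁰) (hIord : ∃ n : ℕ, orderOf (ClassGroup.mk0 I) = p ^ n)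
    (J : (Ideal (𝓞 F))⁰)
    (hJ : (J : Ideal (𝓞 F)) =
      Ideal.map (galRestrict (𝓞 k) k F (𝓞 F) τ) (I : Ideal (𝓞 F))) :
    ClassGroup.mk0 I * ClassGroup.mk0 J = 1 := by
  classical
  obtain ⟨n, hn⟩ := hIord
  set σ : (𝓞 F) ≃ₐ[𝓞 k] (𝓞 F) := galRestrict (𝓞 k) k F (𝓞 F) τ with hσdef
  haveI : FiniteDimensional k F := Module.finite_of_finrank_pos (by omega)
  -- `τ * τ = 1`
  have hcard : Fintype.card (F ≃ₐ[k] F) = 2 := by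
    rw [← Nat.card_eq_fintype_card, IsGalois.card_aut_eq_finrank, hdeg]
  have hτ2 : τ * τ = 1 := by
    have := pow_card_eq_one (G := F ≃ₐ[k] F) (x := τ)
    rw [hcard, pow_two] at this
    exact this
  have hσ2 : ∀ x : 𝓞 F, σ (σ x) = x := by
    intro x
    have : σ * σ = 1 := by
      rw [hσdef, ← map_mul (galRestrict (𝓞 k) k F (𝓞 F)), hτ2,
        map_one (galRestrict (𝓞 k) k F (𝓞 F))]
    calc σ (σ x) = (σ * σ) x := rfl
      _ = x := by rw [this]; rfl
  -- every element of `F` fixed by the Galois group is in the image of `k`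
  have hfixF : ∀ y : F, (∀ ρ : F ≃ₐ[k] F, ρ y = y) → ∃ c : k, algebraMap k F c = y := by
    intro y hy
    have : y ∈ IntermediateField.fixedField (⊤ : Subgroup (F ≃ₐ[k] F)) := by
      rintro ⟨ρ, -⟩
      exact hy ρ
    have hff : IntermediateField.fixedField (⊤ : Subgroup (F ≃ₐ[k] F)) = ⊥ :=
      OrderIso.map_bot (IsGalois.intermediateFieldEquivSubgroup (F := k) (E := F)).symm
    rw [hff] at this
    exact IntermediateField.mem_bot.mp this
  -- elements of `𝓞 F` fixed by `σ` come from `𝓞 k`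
  have hfix : ∀ y : 𝓞 F, σ y = y → ∃ c : 𝓞 k, algebraMap (𝓞 k) (𝓞 F) c = y := by
    intro y hyfix
    have hρ : ∀ ρ : F ≃ₐ[k] F, ρ (algebraMap (𝓞 F) F y) = algebraMap (𝓞 F) F y := by
      intro ρ
      have hρcases : ρ = 1 ∨ ρ = τ := by
        by_contra hcon
        push_neg at hcon
        obtain ⟨h1, h2⟩ := hcon
        have : ({1, τ, ρ} : Finset (F ≃ₐ[k] F)).card ≤ 2 := hcard ▸ Finset.card_le_univ _
        rw [Finset.card_insert_of_notMem (by simp [Ne.symm hτ, Ne.symm h1]),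
          Finset.card_insert_of_notMem (by simp [Ne.symm h2]), Finset.card_singleton] at this
        omega
      rcases hρcases with rfl | hρτ
      · simp
      · rw [hρτ, ← algebraMap_galRestrict_apply (𝓞 k) τ y]
        exact congrArg _ hyfix
    obtain ⟨c, hc⟩ := hfixF (algebraMap (𝓞 F) F y) hρ
    have hcint : IsIntegral ℤ c := by
      have hyint : IsIntegral ℤ (algebraMap (𝓞 F) F y) := NumberField.RingOfIntegers.isIntegral_coe y
      rw [← hc] at hyint
      exact (isIntegral_algebraMap_iff (algebraMap k F).injective).mp hyint
    refine ⟨⟨c, hcint⟩, ?_⟩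
    apply (IsFractionRing.injective (𝓞 F) F)
    exact ((IsScalarTower.algebraMap_apply (𝓞 k) (𝓞 F) F _).symm.trans
      (IsScalarTower.algebraMap_apply (𝓞 k) k F _)).trans hc
  -- set up the ideal over `k`
  set B : Ideal (𝓞 F) := Ideal.span ((fun x => x * σ x) '' ((I : Ideal (𝓞 F)) : Set (𝓞 F)))
    with hBdef
  have hkey : B = (I : Ideal (𝓞 F)) * Ideal.map (σ.toRingEquiv : 𝓞 F →+* 𝓞 F) (I : Ideal (𝓞 F)) :=
    aux_key σ.toRingEquiv (I : Ideal (𝓞 F))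
  have hmapσ : Ideal.map (σ.toRingEquiv : 𝓞 F →+* 𝓞 F) (I : Ideal (𝓞 F)) =
      Ideal.map (galRestrict (𝓞 k) k F (𝓞 F) τ) (I : Ideal (𝓞 F)) := rfl
  set J₀ : Ideal (𝓞 k) := Ideal.comap (algebraMap (𝓞 k) (𝓞 F)) B with hJ₀def
  have hmapJ₀ : Ideal.map (algebraMap (𝓞 k) (𝓞 F)) J₀ = B := by
    apply le_antisymm (Ideal.map_comap_le)
    rw [hBdef, Ideal.span_le]
    rintro _ ⟨x, hx, rfl⟩
    have hfixel : σ (x * σ x) = x * σ x := by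
      rw [map_mul, hσ2 x, mul_comm]
    obtain ⟨c, hc⟩ := hfix _ hfixel
    have hcJ₀ : c ∈ J₀ := by
      rw [hJ₀def, Ideal.mem_comap, hc]
      exact Ideal.subset_span ⟨x, hx, rfl⟩
    have hmm : algebraMap (𝓞 k) (𝓞 F) c ∈ Ideal.map (algebraMap (𝓞 k) (𝓞 F)) J₀ :=
      Ideal.mem_map_of_mem _ hcJ₀
    rw [hc] at hmm
    exact hmm
  -- nontriviality facts
  have hInebot : (I : Ideal (𝓞 F)) ≠ ⊥ := by
    simpa using (mem_nonZeroDivisors_iff_ne_zero.mp I.2)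
  have hBne : B ≠ ⊥ := by
    rw [hkey]
    intro hbot
    rcases Ideal.mul_eq_bot.mp hbot with h | h
    · exact hInebot h
    · refine hInebot ((Ideal.map_eq_bot_iff_of_injective
        (f := (σ.toRingEquiv : 𝓞 F →+* 𝓞 F)) ?_).mp h)
      exact fun a b hab => σ.injective hab
  have hJ₀ne : J₀ ≠ ⊥ := by
    intro h0
    apply hBne
    rw [← hmapJ₀, h0, Ideal.map_bot]
  -- class group computations
  have hz : ClassGroup.mk0 I * ClassGroup.mk0 J = ClassGroup.mk0 (I * J) :=
    (MonoidHom.map_mul (ClassGroup.mk0 (R := 𝓞 F)) I J).symm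
  have hIJ : ((I * J : (Ideal (𝓞 F))⁰) : Ideal (𝓞 F)) = Ideal.map (algebraMap (𝓞 k) (𝓞 F)) J₀ := by
    rw [Submonoid.coe_mul, hJ, hmapJ₀, hkey, hmapσ]
  -- z has p-power order : z ^ p ^ n = 1
  have hzp : (ClassGroup.mk0 (I * J)) ^ (p ^ n) = 1 := by
    have hI1 : (ClassGroup.mk0 I) ^ (p ^ n) = 1 := by
      rw [← hn]; exact pow_orderOf_eq_one _
    have hIpow : ClassGroup.mk0 (I ^ (p ^ n)) = 1 := by rw [map_pow, hI1]
    have hIprin : ((I : Ideal (𝓞 F)) ^ (p ^ n)).IsPrincipal := by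
      have h1 := (ClassGroup.mk0_eq_one_iff (I ^ (p ^ n)).2).mp hIpow
      rwa [SubmonoidClass.coe_pow] at h1
    obtain ⟨b, hb⟩ := hIprin
    rw [Ideal.submodule_span_eq] at hb
    have hJpow : ((J : Ideal (𝓞 F)) ^ (p ^ n)) =
        Ideal.span {galRestrict (𝓞 k) k F (𝓞 F) τ b} := by
      rw [hJ, ← Ideal.map_pow, hb, Ideal.map_span, Set.image_singleton]
    have hJ1 : (ClassGroup.mk0 J) ^ (p ^ n) = 1 := by
      rw [← map_pow]
      refine (ClassGroup.mk0_eq_one_iff (J ^ (p ^ n)).2).mpr ?_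
      rw [SubmonoidClass.coe_pow, hJpow]
      exact ⟨⟨_, rfl⟩⟩
    rw [← hz, mul_pow, hI1, hJ1, mul_one]
  -- z ^ classNumber k = 1
  have hcnk : NumberField.classNumber k = Fintype.card (ClassGroup (𝓞 k)) := rfl
  have hzh : (ClassGroup.mk0 (I * J)) ^ (NumberField.classNumber k) = 1 := by
    set J₀' : (Ideal (𝓞 k))⁰ := ⟨J₀, mem_nonZeroDivisors_iff_ne_zero.mpr hJ₀ne⟩ with hJ₀'
    have hone : (ClassGroup.mk0 J₀') ^ (NumberField.classNumber k) = 1 := by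
      rw [hcnk]; exact pow_card_eq_one
    have hJ₀pow : ClassGroup.mk0 (J₀' ^ NumberField.classNumber k) = 1 := by
      rw [map_pow, hone]
    have hJ₀prin : (J₀ ^ NumberField.classNumber k).IsPrincipal := by
      have h1 := (ClassGroup.mk0_eq_one_iff (J₀' ^ NumberField.classNumber k).2).mp hJ₀pow
      rwa [SubmonoidClass.coe_pow] at h1
    obtain ⟨a, ha⟩ := hJ₀prin
    rw [Ideal.submodule_span_eq] at ha
    rw [← map_pow]
    refine (ClassGroup.mk0_eq_one_iff ((I * J) ^ NumberField.classNumber k).2).mpr ?_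
    rw [SubmonoidClass.coe_pow, hIJ, ← Ideal.map_pow, ha, Ideal.map_span, Set.image_singleton]
    exact ⟨⟨_, rfl⟩⟩
  -- conclude
  rw [hz]
  have hd1 : orderOf (ClassGroup.mk0 (I * J)) ∣ p ^ n := orderOf_dvd_of_pow_eq_one hzp
  have hd2 : orderOf (ClassGroup.mk0 (I * J)) ∣ NumberField.classNumber k :=
    orderOf_dvd_of_pow_eq_one hzh
  have hcop : Nat.Coprime (p ^ n) (NumberField.classNumber k) :=
    Nat.Coprime.pow_left n ((Nat.Prime.coprime_iff_not_dvd hp).mpr hpcl)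
  have hord : orderOf (ClassGroup.mk0 (I * J)) = 1 :=
    Nat.eq_one_of_dvd_coprimes hcop hd1 hd2
  rwa [orderOf_eq_one_iff] at hord
end

section
/- Let K be a number field and let n, e, f ∈ K with f ≠ 0 be such that n is not a square in K and n·(e² − f²n) is a square in K. Then the polynomial P(X) = X⁴ − 2eX² + (e² − f²n) is irreducible over K, and the splitting field F of P over K is a cyclic quartic extension of K: F/K is Galois of degree 4 with cyclic Galois group. -/
open Polynomial IntermediateField

/-- The quartic polynomial `X⁴ - 2eX² + (e² - f²n)` over `K`. -/
noncomputable def quarticPoly (K : Type*) [Field K] (n e f : K) : Polynomial K :=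
  X ^ 4 - C (2 * e) * X ^ 2 + C (e ^ 2 - f ^ 2 * n)

section Aux

variable {K : Type*} [Field K] {n e f : K}

lemma quarticPoly_monic (n e f : K) : (quarticPoly K n e f).Monic := by
  unfold quarticPoly; monicity!

lemma quarticPoly_natDegree (n e f : K) : (quarticPoly K n e f).natDegree = 4 := by
  unfold quarticPoly; compute_degree!

lemma quarticPoly_aeval {F : Type*} [Field F] [Algebra K F] (x : F) :
    aeval x (quarticPoly K n e f) =
      x ^ 4 - 2 * algebraMap K F e * x ^ 2 +
        ((algebraMap K F e) ^ 2 - (algebraMap K F f) ^ 2 * algebraMap K F n) := by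
  simp only [quarticPoly, map_add, map_sub, map_mul, map_pow, aeval_X, aeval_C, map_ofNat]

end Aux

/-- Lemma 3.1(ii). If `n, e, f ∈ K`, `f ≠ 0`, `n` is not a square in
`K`, and `n(e² - f²n)` is a square in `K`, then `P = X⁴ - 2eX² + (e² - f²n)` is
irreducible over `K` and its splitting field is a cyclic quartic extension of `K`. -/
theorem stmt_6 (K : Type*) [Field K] [NumberField K] (n e f : K) (hf : f ≠ 0)
    (hn : ¬ IsSquare n) (hsq : IsSquare (n * (e ^ 2 - f ^ 2 * n))) :
    Irreducible (quarticPoly K n e f) ∧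
    IsGalois K (quarticPoly K n e f).SplittingField ∧
    Module.finrank K (quarticPoly K n e f).SplittingField = 4 ∧
    IsCyclic ((quarticPoly K n e f).SplittingField ≃ₐ[K]
      (quarticPoly K n e f).SplittingField) := by
  classical
  set P := quarticPoly K n e f with hPdef
  have hPmonic : P.Monic := quarticPoly_monic n e f
  have hPdeg : P.natDegree = 4 := quarticPoly_natDegree n e f
  -- scalar facts
  have hn0 : n ≠ 0 := fun h => hn (h ▸ ⟨0, by ring⟩)
  obtain ⟨c, hc⟩ := hsq
  have hd0 : e ^ 2 - f ^ 2 * n ≠ 0 := by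
    intro h
    exact hn ⟨e / f, by field_simp; linear_combination -h⟩
  have hc0 : c ≠ 0 := by
    rintro rfl
    simp only [mul_zero] at hc
    exact (mul_ne_zero hn0 hd0) hc
  have hdns : ¬ IsSquare (e ^ 2 - f ^ 2 * n) := by
    rintro ⟨t, ht⟩
    have ht0 : t ≠ 0 := by rintro rfl; simp at ht; exact hd0 ht
    exact hn ⟨c / t, by field_simp; linear_combination hc - n * ht⟩
  -- the splitting field
  set F := P.SplittingField with hFdef
  have hsplits : Splits (P.map (algebraMap K F)) := SplittingField.splits P
  have hdegne : P.degree ≠ 0 := by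
    rw [degree_eq_natDegree hPmonic.ne_zero, hPdeg]; norm_num
  obtain ⟨α, hαroot⟩ := hsplits.exists_eval_eq_zero (by rw [degree_map]; exact hdegne)
  rw [eval_map, ← aeval_def] at hαroot
  set i := algebraMap K F with hidef
  have hi : Function.Injective i := (algebraMap K F).injective
  have hif : i f ≠ 0 := fun h => hf (hi (by simpa using h))
  have hin : i n ≠ 0 := fun h => hn0 (hi (by simpa using h))
  have hid : i e ^ 2 - i f ^ 2 * i n ≠ 0 := by
    intro h
    apply hd0; apply hi
    rw [map_sub, map_pow, map_mul, map_pow, h, map_zero]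
  have hcF : i n * (i e ^ 2 - i f ^ 2 * i n) = i c * i c := by
    have := congrArg i hc
    rw [map_mul, map_sub, map_pow, map_mul, map_pow, map_mul] at this
    exact this
  have hic0 : i c ≠ 0 := fun h => hc0 (hi (by simpa using h))
  have hroot : α ^ 4 - 2 * i e * α ^ 2 + (i e ^ 2 - i f ^ 2 * i n) = 0 := by
    rw [← quarticPoly_aeval]; exact hαroot
  have hα0 : α ≠ 0 := by
    rintro rfl
    apply hid
    linear_combination hroot
  -- the square root of n
  obtain ⟨s, hfs⟩ : ∃ s : F, i f * s = α ^ 2 - i e := ⟨(α ^ 2 - i e) / i f, by rw [mul_comm]; exact div_mul_cancel₀ _ hif⟩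
  have hs2 : s ^ 2 = i n := by
    have h2 : (i f * s) ^ 2 = (α ^ 2 - i e) ^ 2 := by rw [hfs]
    have h3 : i f ^ 2 * s ^ 2 = i f ^ 2 * i n := by linear_combination h2 + hroot
    exact mul_left_cancel₀ (pow_ne_zero 2 hif) h3
  have hα2 : α ^ 2 = i e + i f * s := by rw [hfs]; ring
  have hs0 : s ≠ 0 := fun h => hin (by rw [← hs2, h]; ring)
  -- linear independence of 1, s over K
  have hkey : ∀ a b : K, i a + i b * s = 0 → a = 0 ∧ b = 0 := by
    intro a b hab
    by_cases hb : b = 0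
    · refine ⟨?_, hb⟩
      apply hi
      simpa [hb] using hab
    · exfalso
      apply hn ⟨-(a / b), ?_⟩
      have hib : i b ≠ 0 := fun h => hb (hi (by simpa using h))
      have hseq : i b * s = - i a := by linear_combination hab
      apply hi
      have hsv : s = (- i a) / i b := eq_div_of_mul_eq hib (by linear_combination hseq)
      rw [map_mul, map_neg, map_div₀, ← hs2, hsv]
      ring
  -- finite dimensionality
  haveI : FiniteDimensional K F := inferInstance
  have hsint : IsIntegral K s := IsIntegral.of_finite K s
  have hαint : IsIntegral K α := IsIntegral.of_finite K α
  -- minimal polynomial of s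
  have hq_irr : Irreducible (X ^ 2 - C n : K[X]) :=
    X_pow_sub_C_irreducible_of_prime Nat.prime_two
      (fun b hb => hn ⟨b, by rw [← hb]; ring⟩)
  have hmins : minpoly K s = X ^ 2 - C n := by
    refine (minpoly.eq_of_irreducible_of_monic hq_irr ?_ (monic_X_pow_sub_C n two_ne_zero)).symm
    rw [map_sub, map_pow, aeval_X, aeval_C, hs2, sub_self]
  have hfrL : Module.finrank K K⟮s⟯ = 2 := by
    rw [IntermediateField.adjoin.finrank hsint, hmins, natDegree_X_pow_sub_C]
  -- elements of K⟮s⟯ and non-squareness of α² there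
  have hsmem : s ∈ K⟮s⟯ := mem_adjoin_simple_self K s
  have hα2mem : α ^ 2 ∈ K⟮s⟯ := by
    rw [hα2]
    exact add_mem (IntermediateField.algebraMap_mem _ e) (mul_mem (IntermediateField.algebraMap_mem _ f) hsmem)
  have hrepr : ∀ t : K⟮s⟯, ∃ u v : K, (algebraMap K⟮s⟯ F t) = i u + i v * s := by
    intro t
    obtain ⟨g, hgdeg, hgt⟩ := (IntermediateField.adjoin.powerBasis hsint).exists_eq_aeval t
    rw [IntermediateField.adjoin.powerBasis_dim, hmins, natDegree_X_pow_sub_C] at hgdeg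
    refine ⟨g.coeff 0, g.coeff 1, ?_⟩
    have h1 : algebraMap K⟮s⟯ F t
        = aeval (algebraMap K⟮s⟯ F ((IntermediateField.adjoin.powerBasis hsint).gen)) g := by
      rw [hgt]
      exact (Polynomial.aeval_algHom_apply (IsScalarTower.toAlgHom K K⟮s⟯ F) _ g).symm
    rw [IntermediateField.adjoin.powerBasis_gen,
      IntermediateField.AdjoinSimple.algebraMap_gen] at h1
    rw [h1]
    conv_lhs => rw [eq_X_add_C_of_natDegree_le_one (by omega : g.natDegree ≤ 1)]
    simp only [map_add, map_mul, aeval_X, aeval_C]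
    ring
  have hsq2 : ∀ t : K⟮s⟯, t ^ 2 ≠ ⟨α ^ 2, hα2mem⟩ := by
    intro t ht
    obtain ⟨u, v, huv⟩ := hrepr t
    have htF : (algebraMap K⟮s⟯ F t) ^ 2 = α ^ 2 := by
      rw [← map_pow, ht]
      rfl
    rw [huv] at htF
    -- (u + v s)² = e + f s
    have hexp : i (u ^ 2 + v ^ 2 * n - e) + i (2 * u * v - f) * s = 0 := by
      push_cast [map_sub, map_add, map_mul, map_pow, map_ofNat]
      linear_combination htF + hα2 - (i v) ^ 2 * hs2
    obtain ⟨h1, h2⟩ := hkey _ _ hexp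
    exact hdns ⟨u ^ 2 - v ^ 2 * n, by
      linear_combination (-(e + u ^ 2 + v ^ 2 * n)) * h1 + n * (f + 2 * u * v) * h2⟩
  -- minpoly of α over K⟮s⟯
  haveI : FiniteDimensional K⟮s⟯ F := FiniteDimensional.right K K⟮s⟯ F
  have hαintL : IsIntegral K⟮s⟯ α := IsIntegral.of_finite K⟮s⟯ α
  have hq2_irr : Irreducible (X ^ 2 - C (⟨α ^ 2, hα2mem⟩ : K⟮s⟯) : Polynomial K⟮s⟯) :=
    X_pow_sub_C_irreducible_of_prime Nat.prime_two (fun t ht => hsq2 t ht)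
  have hminα : minpoly K⟮s⟯ α = X ^ 2 - C ⟨α ^ 2, hα2mem⟩ := by
    refine (minpoly.eq_of_irreducible_of_monic hq2_irr ?_ (monic_X_pow_sub_C _ two_ne_zero)).symm
    rw [map_sub, map_pow, aeval_X, aeval_C]
    have h : algebraMap K⟮s⟯ F ⟨α ^ 2, hα2mem⟩ = α ^ 2 := rfl
    rw [h, sub_self]
  -- the second root β
  obtain ⟨β, hβeq⟩ : ∃ β : F, i n * α * β = i c * s :=
    ⟨(i c * s) / (i n * α), by rw [mul_comm]; exact div_mul_cancel₀ _ (mul_ne_zero hin hα0)⟩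
  have hαsq0 : i e + i f * s ≠ 0 := by rw [← hα2]; exact pow_ne_zero 2 hα0
  have hβ2 : β ^ 2 = i e - i f * s := by
    have hsq' : (i n * α * β) ^ 2 = (i c * s) ^ 2 := by rw [hβeq]
    have h4 : (i n) ^ 2 * (i e + i f * s) * β ^ 2
        = (i n) ^ 2 * (i e + i f * s) * (i e - i f * s) := by
      linear_combination hsq' - (i n) ^ 2 * β ^ 2 * hα2 - s ^ 2 * hcF + i n * (i e) ^ 2 * hs2
    exact mul_left_cancel₀ (mul_ne_zero (pow_ne_zero 2 hin) hαsq0) h4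
  have hβ0 : β ≠ 0 := by
    rintro rfl
    rw [mul_zero] at hβeq
    exact (mul_ne_zero hic0 hs0) hβeq.symm
  have hβroot : aeval β P = 0 := by
    show aeval β (quarticPoly K n e f) = 0
    rw [quarticPoly_aeval]
    linear_combination (β ^ 2 - i e - i f * s) * hβ2 + (i f) ^ 2 * hs2
  -- all roots lie in K⟮α⟯
  have hαmem : α ∈ K⟮α⟯ := mem_adjoin_simple_self K α
  have hsmemα : s ∈ K⟮α⟯ := by
    have h1 : i f * s ∈ K⟮α⟯ := by
      rw [hfs]; exact sub_mem (pow_mem hαmem 2) (IntermediateField.algebraMap_mem _ e)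
    have h2 : s = (i f)⁻¹ * (i f * s) := (inv_mul_cancel_left₀ hif s).symm
    rw [h2]
    exact mul_mem (inv_mem (IntermediateField.algebraMap_mem _ f)) h1
  have hβmemα : β ∈ K⟮α⟯ := by
    have h1 : β = (i n * α)⁻¹ * (i c * s) := by
      rw [← hβeq, inv_mul_cancel_left₀ (mul_ne_zero hin hα0)]
    rw [h1]
    exact mul_mem (inv_mem (mul_mem (IntermediateField.algebraMap_mem _ n) hαmem))
      (mul_mem (IntermediateField.algebraMap_mem _ c) hsmemα)
  have hrootsub : P.rootSet F ⊆ (K⟮α⟯ : Set F) := by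
    intro x hx
    have hxr : aeval x (quarticPoly K n e f) = 0 := (Polynomial.mem_rootSet.mp hx).2
    rw [quarticPoly_aeval] at hxr
    have hfact : (x ^ 2 - α ^ 2) * (x ^ 2 - β ^ 2) = 0 := by
      rw [hα2, hβ2]
      linear_combination hxr - (i f) ^ 2 * hs2
    rcases mul_eq_zero.mp hfact with h | h
    · rcases mul_eq_zero.mp (show (x - α) * (x + α) = 0 by linear_combination h) with h' | h'
      · have hx' : x = α := by linear_combination h'
        rw [hx']; exact hαmem
      · have hx' : x = -α := by linear_combination h'
        rw [hx']; exact neg_mem hαmem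
    · rcases mul_eq_zero.mp (show (x - β) * (x + β) = 0 by linear_combination h) with h' | h'
      · have hx' : x = β := by linear_combination h'
        rw [hx']; exact hβmemα
      · have hx' : x = -β := by linear_combination h'
        rw [hx']; exact neg_mem hβmemα
  -- K⟮α⟯ is everything
  have htop : K⟮α⟯ = ⊤ := by
    apply IntermediateField.toSubalgebra_injective
    rw [IntermediateField.top_toSubalgebra]
    refine top_le_iff.mp ?_
    rw [← Polynomial.SplittingField.adjoin_rootSet P]
    exact Algebra.adjoin_le hrootsub
  -- K⟮s⟯⟮α⟯ is everything over K⟮s⟯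
  have hLαtop : K⟮s⟯⟮α⟯ = (⊤ : IntermediateField K⟮s⟯ F) := by
    apply IntermediateField.restrictScalars_injective K
    rw [IntermediateField.restrictScalars_top]
    refine le_antisymm le_top ?_
    rw [← htop]
    refine IntermediateField.adjoin_le_iff.mpr ?_
    simp only [Set.singleton_subset_iff]
    exact mem_adjoin_simple_self K⟮s⟯ α
  -- degree computations
  have hfr2 : Module.finrank K⟮s⟯ F = 2 := by
    have h := IntermediateField.adjoin.finrank hαintL
    rw [hminα, natDegree_X_pow_sub_C, hLαtop, IntermediateField.finrank_top'] at h
    exact h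
  have hfr4 : Module.finrank K F = 4 := by
    have h := Module.finrank_mul_finrank K K⟮s⟯ F
    rw [hfrL, hfr2] at h
    omega
  -- the minimal polynomial of α is P
  have hminKα : minpoly K α = P := by
    have hdeg : (minpoly K α).natDegree = 4 := by
      have h := IntermediateField.adjoin.finrank hαint
      rw [htop, IntermediateField.finrank_top', hfr4] at h
      omega
    obtain ⟨q, hq⟩ := minpoly.dvd K α hαroot
    have hmin0 : minpoly K α ≠ 0 := minpoly.ne_zero hαint
    have hq0 : q ≠ 0 := by
      rintro rfl
      rw [mul_zero] at hq
      exact hPmonic.ne_zero hq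
    have hqdeg : q.natDegree = 0 := by
      have h := natDegree_mul hmin0 hq0
      rw [← hq, hPdeg, hdeg] at h
      omega
    have hlc : q.coeff 0 = 1 := by
      have h2 := congrArg leadingCoeff hq
      rw [leadingCoeff_mul, hPmonic.leadingCoeff, (minpoly.monic hαint).leadingCoeff,
        one_mul, leadingCoeff, hqdeg] at h2
      exact h2.symm
    rw [eq_C_of_natDegree_eq_zero hqdeg, hlc] at hq
    simpa using hq.symm
  have hPirr : Irreducible P := hminKα ▸ minpoly.irreducible hαint
  -- Galois
  haveI hgal : IsGalois K F := ⟨⟩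
  refine ⟨hPirr, hgal, hfr4, ?_⟩
  -- the Galois group is cyclic
  have hminKβ : minpoly K β = P :=
    (minpoly.eq_of_irreducible_of_monic hPirr hβroot hPmonic).symm
  obtain ⟨σ, hσα⟩ : β ∈ MulAction.orbit (F ≃ₐ[K] F) α :=
    (Normal.minpoly_eq_iff_mem_orbit (F := K) (E := F)).mp (hminKβ.trans hminKα.symm)
  have hσα' : σ α = β := hσα
  have hσe : ∀ u : K, σ (i u) = i u := fun u => σ.commutes u
  have hσs : σ s = -s := by
    have h1 : i f * σ s = β ^ 2 - i e := by
      have h := congrArg σ hfs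
      rw [map_mul, map_sub, map_pow, hσα', hσe, hσe] at h
      exact h
    have h2 : i f * σ s = i f * (-s) := by rw [h1, hβ2]; ring
    exact mul_left_cancel₀ hif h2
  have hσβ : σ β = -α := by
    have h1 : i n * β * σ β = i c * -s := by
      have h := congrArg σ hβeq
      rw [map_mul, map_mul, map_mul, hσα', hσs, hσe, hσe] at h
      exact h
    have h2 : i n * β * σ β = i n * β * -α := by
      rw [h1]
      linear_combination hβeq
    exact mul_left_cancel₀ (mul_ne_zero hin hβ0) h2
  haveI : CharZero F := charZero_of_injective_algebraMap hi
  have hσ2ne : σ * σ ≠ 1 := by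
    intro h
    have h1 : σ (σ α) = α := by
      rw [← AlgEquiv.mul_apply, h, AlgEquiv.one_apply]
    rw [hσα', hσβ] at h1
    have h2 : (2 : F) * α = 0 := by linear_combination -h1
    simp only [mul_eq_zero, OfNat.ofNat_ne_zero, false_or] at h2
    exact hα0 h2
  have hcard : Nat.card (F ≃ₐ[K] F) = 4 := by
    rw [IsGalois.card_aut_eq_finrank, hfr4]
  have hdvd : orderOf σ ∣ 4 := by
    rw [← hcard]
    exact orderOf_dvd_natCard σ
  have h1 : orderOf σ ≠ 1 := by
    intro h
    apply hσ2ne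
    rw [orderOf_eq_one_iff.mp h, mul_one]
  have h2 : orderOf σ ≠ 2 := by
    intro h
    apply hσ2ne
    have hp := pow_orderOf_eq_one σ
    rwa [h, pow_two] at hp
  have hord : orderOf σ = 4 := by
    have hle : orderOf σ ≤ 4 := Nat.le_of_dvd (by norm_num) hdvd
    have hpos : 0 < orderOf σ := orderOf_pos σ
    interval_cases hx : orderOf σ <;> omega
  exact isCyclic_of_orderOf_eq_card σ (by rw [hord, hcard])
end

section
/- Let d ≠ 1 be a squarefree integer not divisible by 5, let ζ₅ = exp(2πi/5) ∈ ℂ, and fix s ∈ ℂ with s² = d. Then the minimal polynomial over ℚ of the algebraic number α = (ζ₅ − ζ₅⁻¹)·s ∈ ℂ is X⁴ + 5d·X² + 5d²; in particular, this quartic polynomial is irreducible over ℚ and α⁴ + 5d·α² + 5d² = 0. -/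
open Polynomial

/-- Corollary 3.2. For a squarefree integer `d ≠ 1` prime to `5`,
`ζ₅ = exp(2πi/5)` and `s` a complex square root of `d`, the minimal polynomial over `ℚ`
of `α = (ζ₅ - ζ₅⁻¹)·s` is `X⁴ + 5dX² + 5d²`; in particular this polynomial is
irreducible over `ℚ` and `α⁴ + 5dα² + 5d² = 0`. -/
theorem stmt_7 (d : ℤ) (hd1 : d ≠ 1) (hsf : Squarefree d) (hd5 : ¬ (5 : ℤ) ∣ d)
    (s : ℂ) (hs : s ^ 2 = (d : ℂ))
    (ζ : ℂ) (hζ : ζ = Complex.exp (2 * Real.pi * Complex.I / 5))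
    (α : ℂ) (hα : α = (ζ - ζ⁻¹) * s) :
    minpoly ℚ α = X ^ 4 + C (5 * (d : ℚ)) * X ^ 2 + C (5 * (d : ℚ) ^ 2) ∧
    Irreducible ((X ^ 4 + C (5 * (d : ℚ)) * X ^ 2 + C (5 * (d : ℚ) ^ 2) : Polynomial ℚ)) ∧
    α ^ 4 + 5 * (d : ℂ) * α ^ 2 + 5 * (d : ℂ) ^ 2 = 0 := by
  -- The root equation
  have hroot : α ^ 4 + 5 * (d : ℂ) * α ^ 2 + 5 * (d : ℂ) ^ 2 = 0 := by
    have hprim : IsPrimitiveRoot ζ 5 := by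
      rw [hζ]
      have h := Complex.isPrimitiveRoot_exp 5 (by norm_num)
      norm_num at h
      convert h using 2
    have hζ5 : ζ ^ 5 = 1 := hprim.pow_eq_one
    have hζ1 : ζ ≠ 1 := hprim.ne_one (by norm_num)
    have hinv : ζ⁻¹ = ζ ^ 4 :=
      inv_eq_of_mul_eq_one_right (by rw [← pow_succ']; exact hζ5)
    have hsum : ζ ^ 4 + ζ ^ 3 + ζ ^ 2 + ζ + 1 = 0 := by
      have h : (ζ - 1) * (ζ ^ 4 + ζ ^ 3 + ζ ^ 2 + ζ + 1) = 0 := by linear_combination hζ5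
      rcases mul_eq_zero.mp h with h' | h'
      · exact absurd (sub_eq_zero.mp h') hζ1
      · exact h'
    have ht : ((ζ - ζ ^ 4) ^ 2) ^ 2 + 5 * (ζ - ζ ^ 4) ^ 2 + 5 = 0 := by
      have h1 : (ζ - ζ ^ 4) ^ 2 = ζ ^ 2 + ζ ^ 3 - 2 := by
        linear_combination (ζ ^ 3 - 2) * hζ5
      rw [h1]
      linear_combination hsum + (ζ + 2) * hζ5
    rw [hα, hinv]
    linear_combination (d : ℂ) ^ 2 * ht +
      ((ζ - ζ ^ 4) ^ 4 * (s ^ 2 + (d : ℂ)) + 5 * (d : ℂ) * (ζ - ζ ^ 4) ^ 2) * hs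
  -- Irreducibility via Eisenstein at 5
  have hirrQ : Irreducible
      ((X ^ 4 + C (5 * (d : ℚ)) * X ^ 2 + C (5 * (d : ℚ) ^ 2) : Polynomial ℚ)) := by
    have hmonic : (X ^ 4 + C (5 * d) * X ^ 2 + C (5 * d ^ 2) : ℤ[X]).Monic := by monicity!
    have hdeg : (X ^ 4 + C (5 * d) * X ^ 2 + C (5 * d ^ 2) : ℤ[X]).natDegree = 4 := by
      compute_degree!
    have heis : (X ^ 4 + C (5 * d) * X ^ 2 + C (5 * d ^ 2) : ℤ[X]).IsEisensteinAt
        (Ideal.span {5}) := by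
      apply hmonic.isEisensteinAt_of_mem_of_notMem
      · rw [Ne, Ideal.span_singleton_eq_top]
        intro h
        exact (Int.isUnit_iff.mp h).elim (by omega) (by omega)
      · intro n hn
        rw [hdeg] at hn
        rw [Ideal.mem_span_singleton]
        interval_cases n <;>
          simp only [coeff_add, coeff_C_mul, coeff_X_pow, coeff_C] <;> norm_num
      · rw [Ideal.span_singleton_pow, Ideal.mem_span_singleton]
        simp only [coeff_add, coeff_C_mul, coeff_X_pow, coeff_C]
        norm_num
        intro ⟨k, hk⟩
        have h5 : (5 : ℤ) ∣ d ^ 2 := ⟨k, by linarith⟩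
        exact hd5 ((Int.Prime.dvd_pow' (by norm_num) h5))
    have hirr : Irreducible (X ^ 4 + C (5 * d) * X ^ 2 + C (5 * d ^ 2) : ℤ[X]) :=
      heis.irreducible (Ideal.span_singleton_prime (by norm_num) |>.mpr (by norm_num))
        hmonic.isPrimitive (by omega)
    have hmap : (X ^ 4 + C (5 * d) * X ^ 2 + C (5 * d ^ 2) : ℤ[X]).map (algebraMap ℤ ℚ)
        = X ^ 4 + C (5 * (d : ℚ)) * X ^ 2 + C (5 * (d : ℚ) ^ 2) := by
      simp only [algebraMap_int_eq, Polynomial.map_add, Polynomial.map_mul, Polynomial.map_pow,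
        Polynomial.map_X, Polynomial.map_C, Int.cast_mul, Int.cast_pow, Int.cast_ofNat]
      norm_num
    rw [← hmap]
    exact (hmonic.irreducible_iff_irreducible_map_fraction_map).mp hirr
  -- the minimal polynomial
  have hmonicQ : (X ^ 4 + C (5 * (d : ℚ)) * X ^ 2 + C (5 * (d : ℚ) ^ 2) : Polynomial ℚ).Monic := by
    monicity!
  have haev : aeval α (X ^ 4 + C (5 * (d : ℚ)) * X ^ 2 + C (5 * (d : ℚ) ^ 2) : Polynomial ℚ) = 0 := by
    simp only [map_add, map_mul, map_pow, aeval_X, aeval_C]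
    push_cast
    convert hroot using 2 <;> simp only [map_ofNat, eq_ratCast, Rat.cast_intCast, Rat.cast_ofNat] <;> ring
  exact ⟨(minpoly.eq_of_irreducible_of_monic hirrQ haev hmonicQ).symm, hirrQ, hroot⟩
end

section
/- Let d ≠ 1 be a squarefree integer not divisible by 5, let ζ₅ = exp(2πi/5) ∈ ℂ, fix s ∈ ℂ with s² = d, and let M = ℚ((ζ₅ − ζ₅⁻¹)·s) be the subfield of ℂ generated over ℚ by α = (ζ₅ − ζ₅⁻¹)·s. Then M is a cyclic quartic field: [M : ℚ] = 4, the extension M/ℚ is Galois, and the Galois group Gal(M/ℚ) is cyclic of order 4. -/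
open Polynomial IntermediateField

set_option maxHeartbeats 2000000 in
set_option synthInstance.maxHeartbeats 400000 in
/-- For a squarefree integer `d ≠ 1` prime to `5`,
`ζ₅ = exp(2πi/5)`, and `s` a complex square root of `d`, the field
`M = ℚ((ζ₅ - ζ₅⁻¹)·s)` is a cyclic quartic field: `[M : ℚ] = 4`, `M/ℚ` is Galois,
and `Gal(M/ℚ)` is cyclic (of order 4). -/
theorem stmt_9 (d : ℤ) (hd1 : d ≠ 1) (hsf : Squarefree d) (hd5 : ¬ (5 : ℤ) ∣ d)
    (s : ℂ) (hs : s ^ 2 = (d : ℂ))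
    (ζ : ℂ) (hζ : ζ = Complex.exp (2 * Real.pi * Complex.I / 5))
    (M : IntermediateField ℚ ℂ)
    (hM : M = IntermediateField.adjoin ℚ {(ζ - ζ⁻¹) * s}) :
    Module.finrank ℚ M = 4 ∧ IsGalois ℚ M ∧ IsCyclic (M ≃ₐ[ℚ] M) := by
  subst hM
  have hprim : IsPrimitiveRoot ζ 5 := hζ ▸ Complex.isPrimitiveRoot_exp 5 (by norm_num)
  have hζ5 : ζ ^ 5 = 1 := hprim.pow_eq_one
  have hζ0 : ζ ≠ 0 := fun h => by simp [h] at hζ5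
  have hζinv : ζ⁻¹ = ζ ^ 4 := by
    field_simp
    linear_combination -hζ5
  have hsum : 1 + ζ + ζ ^ 2 + ζ ^ 3 + ζ ^ 4 = 0 := by
    have h := hprim.geom_sum_eq_zero (by norm_num)
    simp [Finset.sum_range_succ] at h
    linear_combination h
  have hd0 : d ≠ 0 := hsf.ne_zero
  have hd0' : (d : ℂ) ≠ 0 := Int.cast_ne_zero.mpr hd0
  set α : ℂ := (ζ - ζ⁻¹) * s with hα
  clear_value α
  have h2 : α ^ 2 = d * (ζ ^ 2 + ζ ^ 3 - 2) := by
    rw [hα, hζinv]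
    linear_combination (ζ - ζ ^ 4) ^ 2 * hs + (d : ℂ) * (ζ ^ 3 - 2) * hζ5
  have hkey : α ^ 4 + 5 * d * α ^ 2 + 5 * d ^ 2 = 0 := by
    linear_combination (α ^ 2 + (d : ℂ) * (ζ ^ 2 + ζ ^ 3 - 2) + 5 * d) * h2 +
      (d : ℂ) ^ 2 * hsum + (d : ℂ) ^ 2 * (ζ + 2) * hζ5
  have hα0 : α ≠ 0 := by
    intro h
    rw [h] at hkey
    simp at hkey
    exact hd0' (by tauto)
  -- the minimal polynomial
  set Qz : ℤ[X] := X ^ 4 + C (5 * d) * X ^ 2 + C (5 * d ^ 2) with hQ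
  have hQmonic : Qz.Monic := by unfold Qz; monicity!
  have hQdeg : Qz.natDegree = 4 := by unfold Qz; compute_degree!
  have hprime5 : Prime (5 : ℤ) := by norm_num
  have hEis : Qz.IsEisensteinAt (Ideal.span {(5 : ℤ)}) := by
    constructor
    · rw [hQmonic.leadingCoeff, Ideal.mem_span_singleton]
      norm_num
    · intro n hn
      rw [hQdeg] at hn
      rw [Ideal.mem_span_singleton]
      interval_cases n <;>
        simp only [hQ, coeff_add, coeff_C_mul, coeff_X_pow, coeff_C] <;> norm_num
    · rw [Ideal.span_singleton_pow, Ideal.mem_span_singleton]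
      intro hdvd
      simp only [hQ, coeff_add, coeff_C_mul, coeff_X_pow, coeff_C] at hdvd
      norm_num at hdvd
      have h5d : (5 : ℤ) ∣ d := by
        have : (5 : ℤ) ∣ d ^ 2 := by
          rcases hdvd with ⟨c, hc⟩
          exact ⟨c, by linarith⟩
        exact hprime5.dvd_of_dvd_pow this
      exact hd5 h5d
  have hQirr : Irreducible Qz :=
    hEis.irreducible ((Ideal.span_singleton_prime (by norm_num)).mpr hprime5)
      hQmonic.isPrimitive (by rw [hQdeg]; norm_num)
  set P : ℚ[X] := X ^ 4 + C (((5 * d : ℤ) : ℚ)) * X ^ 2 + C (((5 * d ^ 2 : ℤ) : ℚ)) with hP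
  have hPmap : P = Qz.map (Int.castRingHom ℚ) := by
    simp only [hP, hQ, Polynomial.map_add, Polynomial.map_mul, Polynomial.map_pow,
      Polynomial.map_X, Polynomial.map_C, map_intCast, Int.coe_castRingHom]
  have hPirr : Irreducible P := by
    rw [hPmap]
    exact (IsPrimitive.Int.irreducible_iff_irreducible_map_cast hQmonic.isPrimitive).mp hQirr
  have hPmonic : P.Monic := by
    rw [hPmap]; exact hQmonic.map _
  have hPdeg : P.natDegree = 4 := by unfold P; compute_degree!
  have hProot : aeval α P = 0 := by
    simp only [hP, map_add, map_mul, map_pow, aeval_X, aeval_C, map_intCast]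
    push_cast
    linear_combination hkey
  have hmin : minpoly ℚ α = P := (minpoly.eq_of_irreducible_of_monic hPirr hProot hPmonic).symm
  have hint : IsIntegral ℚ α := ⟨P, hPmonic, hProot⟩
  have h4 : Module.finrank ℚ (adjoin ℚ {α}) = 4 := by
    rw [adjoin.finrank hint, hmin, hPdeg]
  -- the other roots
  set v : ℂ := -(2 * α ^ 2 / d + 5) with hv
  clear_value v
  have hv2 : v ^ 2 = 5 := by
    rw [hv]
    field_simp
    linear_combination 4 * hkey
  set β : ℂ := d * v / α with hβ
  clear_value β
  have hβ0 : β ≠ 0 := by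
    rw [hβ]
    have hv0 : v ≠ 0 := by
      intro h
      rw [h] at hv2
      norm_num at hv2
    exact div_ne_zero (mul_ne_zero hd0' hv0) hα0
  have hβ2 : β ^ 2 = 5 * d ^ 2 / α ^ 2 := by
    rw [hβ]
    field_simp
    linear_combination hv2
  have hsum2 : α ^ 2 + β ^ 2 = -(5 * d) := by
    rw [hβ2]
    field_simp
    linear_combination hkey
  have hprod2 : α ^ 2 * β ^ 2 = 5 * d ^ 2 := by
    rw [hβ2]
    field_simp
  have hαM : α ∈ adjoin ℚ {α} := mem_adjoin_simple_self ℚ α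
  have hdM : (d : ℂ) ∈ adjoin ℚ {α} := intCast_mem _ d
  have hvM : v ∈ adjoin ℚ {α} := by
    rw [hv]
    exact neg_mem (add_mem (div_mem (mul_mem (ofNat_mem _ 2) (pow_mem hαM 2)) hdM)
      (ofNat_mem _ 5))
  have hβM : β ∈ adjoin ℚ {α} := by
    rw [hβ]
    exact div_mem (mul_mem hdM hvM) hαM
  have hPne : P ≠ 0 := hPmonic.ne_zero
  have hroots : ∀ x ∈ P.rootSet ℂ, x ∈ adjoin ℚ {α} := by
    intro x hx
    rw [mem_rootSet] at hx
    have hx0 : x ^ 4 + 5 * d * x ^ 2 + 5 * d ^ 2 = 0 := by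
      have h := hx.2
      simp only [hP, map_add, map_mul, map_pow, aeval_X, aeval_C, map_intCast] at h
      push_cast at h
      linear_combination h
    have hfac : (x ^ 2 - α ^ 2) * (x ^ 2 - β ^ 2) = 0 := by
      linear_combination hx0 - x ^ 2 * hsum2 + hprod2
    rcases mul_eq_zero.mp hfac with h | h
    · rcases mul_eq_zero.mp (show (x - α) * (x + α) = 0 by linear_combination h) with h' | h'
      · exact (sub_eq_zero.mp h') ▸ hαM
      · exact (eq_neg_of_add_eq_zero_left h') ▸ neg_mem hαM
    · rcases mul_eq_zero.mp (show (x - β) * (x + β) = 0 by linear_combination h) with h' | h'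
      · exact (sub_eq_zero.mp h') ▸ hβM
      · exact (eq_neg_of_add_eq_zero_left h') ▸ neg_mem hβM
  have hsplits : (P.map (algebraMap ℚ (adjoin ℚ {α}))).Splits :=
    IntermediateField.splits_of_splits (IsAlgClosed.splits (P.map (algebraMap ℚ ℂ))) hroots
  have hadj : adjoin ℚ {α} = adjoin ℚ (P.rootSet ℂ) := by
    apply le_antisymm
    · rw [adjoin_le_iff]
      rintro x (rfl : x = α)
      exact subset_adjoin ℚ _ (by rw [mem_rootSet]; exact ⟨hPne, hProot⟩)
    · rw [adjoin_le_iff]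
      exact hroots
  haveI hsplF : P.IsSplittingField ℚ (adjoin ℚ {α}) := isSplittingField_iff.mpr ⟨hsplits, hadj⟩
  haveI : Normal ℚ (adjoin ℚ {α}) := Normal.of_isSplittingField P
  haveI : FiniteDimensional ℚ (adjoin ℚ {α}) := adjoin.finiteDimensional hint
  haveI hgal : IsGalois ℚ (adjoin ℚ {α}) := ⟨⟩
  -- the automorphism of order 4
  have hcard : Fintype.card ((adjoin ℚ {α}) ≃ₐ[ℚ] (adjoin ℚ {α})) = 4 := by
    rw [← Nat.card_eq_fintype_card, IsGalois.card_aut_eq_finrank, h4]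
  set pb := adjoin.powerBasis hint with hpb
  have hβroot : aeval (⟨β, hβM⟩ : adjoin ℚ {α}) (minpoly ℚ pb.gen) = 0 := by
    rw [hpb, adjoin.powerBasis_gen]
    erw [minpoly_gen]
    rw [hmin]
    have hcoe : (algebraMap (adjoin ℚ {α}) ℂ) (aeval (⟨β, hβM⟩ : adjoin ℚ {α}) P) =
        aeval β P := by
      rw [← aeval_algebraMap_apply]
      rfl
    have hβP : aeval β P = 0 := by
      simp only [hP, map_add, map_mul, map_pow, aeval_X, aeval_C, map_intCast]
      push_cast
      have hβ4 : β ^ 4 + 5 * d * β ^ 2 + 5 * d ^ 2 = 0 := by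
        have e : β ^ 4 = (β ^ 2) ^ 2 := by ring
        rw [e, hβ2]
        field_simp
        linear_combination (5 * (d:ℂ) ^ 2) * hkey
      linear_combination hβ4
    apply (algebraMap (adjoin ℚ {α}) ℂ).injective
    rw [hcoe, hβP, map_zero]
  set φ : (adjoin ℚ {α}) →ₐ[ℚ] (adjoin ℚ {α}) := pb.lift ⟨β, hβM⟩ hβroot with hφ
  set σ : (adjoin ℚ {α}) ≃ₐ[ℚ] (adjoin ℚ {α}) := AlgEquiv.ofBijective φ φ.bijective with hσ
  have hgen : (⟨α, hαM⟩ : adjoin ℚ {α}) = pb.gen := by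
    rw [hpb, adjoin.powerBasis_gen]
    rfl
  have hσα : σ ⟨α, hαM⟩ = ⟨β, hβM⟩ := by
    show φ ⟨α, hαM⟩ = ⟨β, hβM⟩
    rw [hgen, hφ]
    exact pb.lift_gen _ _
  have hβexpr : (⟨β, hβM⟩ : adjoin ℚ {α}) =
      (d : adjoin ℚ {α}) * (-(2 * (⟨α, hαM⟩ : adjoin ℚ {α}) ^ 2 / (d : adjoin ℚ {α}) + 5)) /
        ⟨α, hαM⟩ := by
    apply Subtype.ext
    show β = algebraMap (adjoin ℚ {α}) ℂ
      ((d : adjoin ℚ {α}) * (-(2 * (⟨α, hαM⟩ : adjoin ℚ {α}) ^ 2 / (d : adjoin ℚ {α}) + 5)) /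
        ⟨α, hαM⟩)
    rw [map_div₀, map_mul, map_intCast, map_neg, map_add, map_div₀, map_mul,
      map_pow, map_intCast, map_ofNat, map_ofNat]
    show β = (d : ℂ) * -(2 * α ^ 2 / d + 5) / α
    rw [hβ, hv]
  have hσβ : σ ⟨β, hβM⟩ = ⟨-α, neg_mem hαM⟩ := by
    rw [hβexpr, map_div₀, map_mul, map_intCast, map_neg, map_add, map_div₀, map_mul,
      map_pow, map_intCast, map_ofNat, map_ofNat, hσα]
    apply Subtype.ext
    show algebraMap (adjoin ℚ {α}) ℂ
      ((d : adjoin ℚ {α}) * (-(2 * (⟨β, hβM⟩ : adjoin ℚ {α}) ^ 2 / (d : adjoin ℚ {α}) + 5)) /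
        ⟨β, hβM⟩) = -α
    rw [map_div₀, map_mul, map_intCast, map_neg, map_add, map_div₀, map_mul,
      map_pow, map_intCast, map_ofNat, map_ofNat]
    show (d : ℂ) * -(2 * β ^ 2 / d + 5) / β = -α
    rw [div_eq_iff hβ0, hβ2, hβ, hv]
    field_simp
    linear_combination (-2 : ℂ) * hkey
  have hσ2ne : σ ^ 2 ≠ 1 := by
    intro h
    have h1 : (σ ^ 2) ⟨α, hαM⟩ = ⟨α, hαM⟩ := by rw [h]; rfl
    rw [pow_two, AlgEquiv.mul_apply, hσα, hσβ] at h1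
    have h2' : -α = α := congrArg Subtype.val h1
    exact hα0 (by linear_combination (-1/2 : ℂ) * h2')
  have hσ4 : σ ^ 4 = 1 := by
    rw [← hcard]
    exact pow_card_eq_one
  have horder : orderOf σ = 4 := by
    have h := orderOf_eq_prime_pow (x := σ) (p := 2) (n := 1)
      (by norm_num; exact hσ2ne) (by norm_num; exact hσ4)
    norm_num at h
    exact h
  exact ⟨h4, hgal, isCyclic_of_orderOf_eq_card σ
    (by rw [Nat.card_eq_fintype_card, hcard, horder])⟩
end

section
/- Let η = (123 + 11·√125)/2 ∈ ℝ. For all integers α ≥ 1 and β ≥ 1, the pair (α, β) satisfies α² − 125β² = 4 together with α + β ≡ 0 (mod 25) if and only if there exists a natural number k ≥ 0 such that α + β·√125 = 2·η^{7+25k}. -/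
/-- The integer pairs `(a,b)` with `a + b√125 = 2·η^n`, `η = (123+11√125)/2`. -/
def s10 : ℕ → ℤ × ℤ
  | 0 => (2, 0)
  | 1 => (123, 11)
  | n + 2 => (123 * (s10 (n+1)).1 - (s10 n).1, 123 * (s10 (n+1)).2 - (s10 n).2)

lemma s10_fst (n : ℕ) : (s10 (n+2)).1 = 123 * (s10 (n+1)).1 - (s10 n).1 := rfl
lemma s10_snd (n : ℕ) : (s10 (n+2)).2 = 123 * (s10 (n+1)).2 - (s10 n).2 := rfl

lemma s10_pell : ∀ n : ℕ, (s10 n).1^2 - 125*(s10 n).2^2 = 4 ∧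
    (s10 (n+1)).1^2 - 125*(s10 (n+1)).2^2 = 4 ∧
    (s10 (n+1)).1*(s10 n).1 - 125*((s10 (n+1)).2*(s10 n).2) = 246
  | 0 => by norm_num [s10]
  | n+1 => by
    obtain ⟨h1, h2, h3⟩ := s10_pell n
    refine ⟨h2, ?_, ?_⟩
    · rw [s10_fst, s10_snd]; linear_combination 15129*h2 - 246*h3 + h1
    · rw [s10_fst, s10_snd]; linear_combination 123*h2 - h3

def s10g : ℕ → ZMod 25
  | 0 => 2
  | 1 => 9
  | n + 2 => 123 * s10g (n+1) - s10g n

lemma s10g_eq : ∀ n : ℕ, s10g n = (((s10 n).1 + (s10 n).2 : ℤ) : ZMod 25)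
  | 0 => by decide
  | 1 => by decide
  | n+2 => by
    have h1 := s10g_eq n
    have h2 := s10g_eq (n+1)
    show 123 * s10g (n+1) - s10g n = _
    rw [h1, h2, s10_fst, s10_snd]; push_cast; ring

set_option maxRecDepth 4000 in
lemma s10g_per : ∀ n : ℕ, s10g (n+50) = s10g n
  | 0 => by decide
  | 1 => by decide
  | n+2 => by
    have h1 := s10g_per n
    have h2 := s10g_per (n+1)
    show s10g ((n+50)+2) = s10g (n+2)
    have e1 : s10g ((n+50)+2) = 123 * s10g ((n+1)+50) - s10g (n+50) := rfl
    rw [e1, h1, h2]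
    rfl

lemma s10g_zero (n : ℕ) : s10g n = 0 ↔ n % 25 = 7 := by
  have key : ∀ q r : ℕ, s10g (50*q + r) = s10g r := by
    intro q
    induction q with
    | zero => intro r; simp
    | succ q ih =>
      intro r
      have e : 50*(q+1)+r = (50*q+r)+50 := by ring
      rw [e, s10g_per, ih]
  have h1 : s10g n = s10g (n % 50) := by
    conv_lhs => rw [← Nat.div_add_mod n 50]
    exact key _ _
  rw [h1]
  have h2 : n % 50 < 50 := Nat.mod_lt _ (by norm_num)
  have h3 : ∀ r : ℕ, r < 50 → (s10g r = 0 ↔ r % 25 = 7) := by decide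
  rw [h3 _ h2, Nat.mod_mod_of_dvd n (by norm_num : (25:ℕ) ∣ 50)]

lemma s10_real : ∀ n : ℕ, (((s10 n).1 : ℝ) + ((s10 n).2 : ℝ) * Real.sqrt 125)
    = 2 * ((123 + 11 * Real.sqrt 125)/2)^n
  | 0 => by norm_num [s10]
  | 1 => by
    show ((123:ℤ):ℝ) + ((11:ℤ):ℝ) * Real.sqrt 125 = _
    push_cast
    ring
  | n+2 => by
    have h1 := s10_real n
    have h2 := s10_real (n+1)
    have hs : Real.sqrt 125 ^ 2 = 125 := Real.sq_sqrt (by norm_num)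
    rw [s10_fst, s10_snd]
    push_cast
    linear_combination 123*h2 - h1 - (121/2)*((123 + 11*Real.sqrt 125)/2)^n * hs

lemma sqrt125_irr : Irrational (Real.sqrt 125) := by
  have h5 : Irrational (Real.sqrt 5) := by
    simpa using (by norm_num : Nat.Prime 5).irrational_sqrt
  have h : Real.sqrt 125 = 5 * Real.sqrt 5 := by
    rw [show (125:ℝ) = 5^2*5 by norm_num, Real.sqrt_mul (by positivity),
      Real.sqrt_sq (by norm_num)]
  rw [h]
  simpa using Irrational.intCast_mul h5 (show (5:ℤ) ≠ 0 by norm_num)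

lemma s10_match {a b c d : ℤ} (h : (a:ℝ) + b * Real.sqrt 125 = c + d * Real.sqrt 125) :
    a = c ∧ b = d := by
  rcases eq_or_ne b d with rfl|hbd
  · have h' : (a:ℝ) = c := by linarith
    exact ⟨by exact_mod_cast h', rfl⟩
  · exfalso
    apply sqrt125_irr
    refine ⟨(a - c)/((d:ℚ) - b), ?_⟩
    have hdb : ((d:ℝ) - b) ≠ 0 := sub_ne_zero.2 (by exact_mod_cast hbd.symm)
    push_cast
    rw [div_eq_iff hdb]
    linarith

lemma no_small (x y : ℤ) (hx : 1 ≤ x) (hy1 : 1 ≤ y) (hy : y ≤ 10)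
    (h : x^2 - 125*y^2 = 4) : False := by
  have hyy : y^2 ≤ 100 := by nlinarith
  have hx2 : x^2 ≤ 12504 := by nlinarith
  have hx111 : x ≤ 111 := by nlinarith [sq_nonneg (x - 112)]
  have hy2 : 1 ≤ y^2 := by nlinarith
  have h5 : (5:ℤ) ∣ (x - 2) * (x + 2) := ⟨25*y^2, by linear_combination h⟩
  have hprime : Prime (5:ℤ) := by norm_num
  rcases hprime.dvd_mul.mp h5 with hc|hc
  · obtain ⟨m, hm⟩ := hc
    have hxm : x = 5*m + 2 := by omega
    subst hxm
    have e1 : 25*(5*m^2 + 4*m - 25*y^2) = 0 := by linear_combination 5*h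
    obtain ⟨M, hM⟩ : ∃ M, M = m^2 := ⟨_, rfl⟩
    obtain ⟨Y, hY⟩ : ∃ Y, Y = y^2 := ⟨_, rfl⟩
    rw [← hM, ← hY] at e1
    obtain ⟨t, ht⟩ : (5:ℤ) ∣ m := by omega
    subst ht
    have e2 : 25*(25*t^2 + 4*t - 5*y^2) = 0 := by linear_combination h
    obtain ⟨T, hT⟩ : ∃ T, T = t^2 := ⟨_, rfl⟩
    rw [← hT, ← hY] at e2
    obtain ⟨s, hs⟩ : (5:ℤ) ∣ t := by omega
    subst hs
    have hs0 : s = 0 := by omega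
    subst hs0
    have hT0 : T = 0 := by rw [hT]; ring
    have hY1 : 1 ≤ Y := by rw [hY]; exact hy2
    omega
  · obtain ⟨m, hm⟩ := hc
    have hxm : x = 5*m - 2 := by omega
    subst hxm
    have e1 : 25*(5*m^2 - 4*m - 25*y^2) = 0 := by linear_combination 5*h
    obtain ⟨M, hM⟩ : ∃ M, M = m^2 := ⟨_, rfl⟩
    obtain ⟨Y, hY⟩ : ∃ Y, Y = y^2 := ⟨_, rfl⟩
    rw [← hM, ← hY] at e1
    obtain ⟨t, ht⟩ : (5:ℤ) ∣ m := by omega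
    subst ht
    have e2 : 25*(25*t^2 - 4*t - 5*y^2) = 0 := by linear_combination h
    obtain ⟨T, hT⟩ : ∃ T, T = t^2 := ⟨_, rfl⟩
    rw [← hT, ← hY] at e2
    obtain ⟨s, hs⟩ : (5:ℤ) ∣ t := by omega
    subst hs
    have hs0 : s = 0 := by omega
    subst hs0
    have hT0 : T = 0 := by rw [hT]; ring
    have hY1 : 1 ≤ Y := by rw [hY]; exact hy2
    omega

lemma s10_key : ∀ m : ℕ, ∀ x y : ℤ, 1 ≤ x → 1 ≤ y → y ≤ (m:ℤ) → x^2 - 125*y^2 = 4 →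
    ∃ n : ℕ, 1 ≤ n ∧ x = (s10 n).1 ∧ y = (s10 n).2 := by
  intro m
  induction m with
  | zero => intro x y hx hy hym h; exfalso; omega
  | succ m ih =>
    intro x y hx hy hym h
    rcases lt_trichotomy y 11 with hlt|heq|hgt
    · exact absurd h (fun h' => no_small x y hx hy (by omega) h')
    · subst heq
      have h0 : (x - 123)*(x + 123) = 0 := by linear_combination h
      rcases mul_eq_zero.mp h0 with h'|h'
      · refine ⟨1, le_refl 1, ?_, rfl⟩
        show x = 123
        omega
      · omega
    · -- descent: y ≥ 12
      -- parity: x ≡ y (mod 2)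
      have hc : ((x:ZMod 2))^2 - 125*((y:ZMod 2))^2 = 4 := by
        have := congrArg (fun z : ℤ => (z : ZMod 2)) h
        push_cast at this
        simpa only [Int.cast_sub, Int.cast_mul, Int.cast_pow, Int.cast_ofNat] using this
      have key2 : ∀ u v : ZMod 2, u^2 - 125*v^2 = 4 → u = v := by decide
      have hxy2 : ((x:ZMod 2)) = ((y:ZMod 2)) := key2 _ _ hc
      have hdxy : (2:ℤ) ∣ (y - x) := ((ZMod.intCast_eq_intCast_iff x y 2).mp hxy2).dvd
      obtain ⟨x', hx'⟩ : (2:ℤ) ∣ (123*x - 1375*y) := by omega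
      obtain ⟨y', hy'⟩ : (2:ℤ) ∣ (123*y - 11*x) := by omega
      have hbig1 : (0:ℤ) < 1375*y + 123*x := by linarith
      have hpos1 : (0:ℤ) < 123*x - 1375*y := by nlinarith [hbig1, h, sq_nonneg y]
      have hbig2 : (0:ℤ) < 123*y + 11*x := by linarith
      have hpos2 : (0:ℤ) < 123*y - 11*x := by nlinarith [hbig2, h, sq_nonneg (y - 12)]
      have hbig3 : (0:ℤ) < x + 11*y := by linarith
      have hxlt : 11*y < x := by nlinarith [hbig3, h, sq_nonneg y]
      have hx'1 : 1 ≤ x' := by omega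
      have hy'1 : 1 ≤ y' := by omega
      have hy'lt : y' < y := by omega
      have h4 : 4*x'^2 - 500*y'^2 = 16 := by
        linear_combination (-(123*x-1375*y+2*x'))*hx' + (125*(123*y-11*x+2*y'))*hy' + 4*h
      have pell' : x'^2 - 125*y'^2 = 4 := by linarith
      obtain ⟨n, hn1, hA, hB⟩ := ih x' y' hx'1 hy'1 (by omega) pell'
      have hx2 : 2*x = 123*x' + 1375*y' := by omega
      have hy2 : 2*y = 11*x' + 123*y' := by omega
      have hrn := s10_real n
      rw [← hA, ← hB] at hrn
      have hs : Real.sqrt 125 ^ 2 = 125 := Real.sq_sqrt (by norm_num)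
      have hx2' : (2:ℝ)*(x:ℝ) = 123*(x':ℝ) + 1375*(y':ℝ) := by exact_mod_cast hx2
      have hy2' : (2:ℝ)*(y:ℝ) = 11*(x':ℝ) + 123*(y':ℝ) := by exact_mod_cast hy2
      have hreal : (x:ℝ) + (y:ℝ)*Real.sqrt 125
          = ((s10 (n+1)).1:ℝ) + ((s10 (n+1)).2:ℝ)*Real.sqrt 125 := by
        rw [s10_real (n+1)]
        linear_combination (1/2)*hx2' + (Real.sqrt 125/2)*hy2'
          + ((123+11*Real.sqrt 125)/2)*hrn - (11*(y':ℝ)/2)*hs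
      obtain ⟨hxeq, hyeq⟩ := s10_match hreal
      exact ⟨n+1, by omega, hxeq, hyeq⟩

/-- Remark 3.5. With `η = (123 + 11√125)/2`, the positive integer
pairs `(α, β)` satisfying the Pellian equation `α² − 125β² = 4` together with
`25 ∣ α + β` are exactly those with `α + β√125 = 2·η^(7+25k)` for some `k ≥ 0`. -/
theorem stmt_10 (η : ℝ) (hη : η = (123 + 11 * Real.sqrt 125) / 2) (α β : ℤ)
    (hα : 1 ≤ α) (hβ : 1 ≤ β) :
    (α ^ 2 - 125 * β ^ 2 = 4 ∧ (25 : ℤ) ∣ (α + β)) ↔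
      ∃ k : ℕ, (α : ℝ) + (β : ℝ) * Real.sqrt 125 = 2 * η ^ (7 + 25 * k) := by
  subst hη
  constructor
  · rintro ⟨hpell, hdvd⟩
    obtain ⟨n, hn1, hA, hB⟩ := s10_key β.toNat α β hα hβ (by omega) hpell
    have hg0 : s10g n = 0 := by
      rw [s10g_eq n, ← hA, ← hB]
      exact (ZMod.intCast_zmod_eq_zero_iff_dvd _ _).mpr hdvd
    have h7 : n % 25 = 7 := (s10g_zero n).mp hg0
    refine ⟨n / 25, ?_⟩
    have hn : 7 + 25 * (n/25) = n := by omega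
    rw [hn, hA, hB]
    exact s10_real n
  · rintro ⟨k, hk⟩
    have hreal : (α:ℝ) + (β:ℝ)*Real.sqrt 125
        = ((s10 (7+25*k)).1:ℝ) + ((s10 (7+25*k)).2:ℝ)*Real.sqrt 125 := by
      rw [s10_real]; exact hk
    obtain ⟨hA, hB⟩ := s10_match hreal
    constructor
    · rw [hA, hB]; exact (s10_pell (7+25*k)).1
    · rw [hA, hB]
      apply (ZMod.intCast_zmod_eq_zero_iff_dvd _ _).mp
      rw [← s10g_eq]
      exact (s10g_zero _).mpr (by omega)
end

section
/- There are infinitely many pairs (α, β) of positive integers with α ≥ 2, β ≥ 2 satisfying simultaneously α² − 125β² = 4 and α + β ≡ 0 (mod 25). -/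
def U : ℤ := 15150619083274690430867635272735711769593957001468574698542796106800993448559390331478841128197829055871714530417941603573593316730765261903986483131132015979503455065171537532668184966447333969531607886740628621422781540412357369123379552229627565218426577001052183031904486018774691014021617363920634744002500001
def V : ℤ := 1355112566856310195163693686714840837778601071241849724213354315322148731087352875061225935403571726530037377881434732025769925708235655004534991410292424959599748398222869928752724193181132509509964244762124220020925443992019696046532143849830534589337893258539338153909354947929619480083814599618712258335489800

def f : ℕ → ℤ × ℤ
  | 0 => (425730551631123, 38078498141827)
  | n+1 => (U * (f n).1 + 125 * V * (f n).2, V * (f n).1 + U * (f n).2)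

lemma hUV : U ^ 2 - 125 * V ^ 2 = 1 := by norm_num [U, V]
lemma hU1 : (1 : ℤ) ≤ U := by norm_num [U]
lemma hV1 : (1 : ℤ) ≤ V := by norm_num [V]
lemma hU25 : (25 : ℤ) ∣ U - 1 := by norm_num [U]
lemma hV25 : (25 : ℤ) ∣ V := by norm_num [V]

lemma key : ∀ n, 2 ≤ (f n).1 ∧ 2 ≤ (f n).2 ∧ (f n).1 ^ 2 - 125 * (f n).2 ^ 2 = 4 ∧
    (25 : ℤ) ∣ ((f n).1 + (f n).2) := by
  intro n
  induction n with
  | zero => refine ⟨by norm_num [f], by norm_num [f], by norm_num [f], by norm_num [f]⟩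
  | succ n ih =>
    obtain ⟨h1, h2, h3, h4⟩ := ih
    have hU := hU1; have hV := hV1
    refine ⟨?_, ?_, ?_, ?_⟩
    · show 2 ≤ U * (f n).1 + 125 * V * (f n).2
      nlinarith
    · show 2 ≤ V * (f n).1 + U * (f n).2
      nlinarith
    · show (U * (f n).1 + 125 * V * (f n).2) ^ 2 - 125 * (V * (f n).1 + U * (f n).2) ^ 2 = 4
      linear_combination ((f n).1 ^ 2 - 125 * (f n).2 ^ 2) * hUV + h3
    · show (25 : ℤ) ∣ (U * (f n).1 + 125 * V * (f n).2 + (V * (f n).1 + U * (f n).2))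
      have : U * (f n).1 + 125 * V * (f n).2 + (V * (f n).1 + U * (f n).2)
          = ((f n).1 + (f n).2) + (U - 1) * ((f n).1 + (f n).2) + V * ((f n).1 + 125 * (f n).2) := by
        ring
      rw [this]
      exact dvd_add (dvd_add h4 (Dvd.dvd.mul_right hU25 _)) (Dvd.dvd.mul_right hV25 _)

lemma fmono : StrictMono fun n => (f n).1 := by
  apply strictMono_nat_of_lt_succ
  intro n
  obtain ⟨h1, h2, _, _⟩ := key n
  have hU := hU1; have hV := hV1
  show (f n).1 < U * (f n).1 + 125 * V * (f n).2
  nlinarith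

/-- There are infinitely many pairs `(α, β)` of integers with
`α, β ≥ 2`, `α² − 125β² = 4` and `25 ∣ α + β`. -/
theorem stmt_11 :
    {p : ℤ × ℤ | 2 ≤ p.1 ∧ 2 ≤ p.2 ∧ p.1 ^ 2 - 125 * p.2 ^ 2 = 4 ∧
      (25 : ℤ) ∣ (p.1 + p.2)}.Infinite := by
  apply Set.infinite_of_injective_forall_mem (f := f)
    (hi := fun a b hab => fmono.injective (congrArg Prod.fst hab))
  intro n
  exact key n
end
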